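/- Let m > 0, μ ≠ μ' real, k, k' ∈ ℝ, c, c' ∈ {±1}. Define ψ^μ_{k,c}(x) = N_{k,c}^{-1/2} e^{i(μx²/2 + kx)}·(m, c√(k²+m²) − k) with N_{k,c} = 2(k²+m² − ck√(k²+m²)). Then |∫_{−∞}^{∞} ⟨ψ^{μ'}_{k',c'}(x), ψ^μ_{k,c}(x)⟩ dx| ≤ √(2π/|μ − μ'|), where ⟨u, v⟩ = conj(u₁)v₁ + conj(u₂)v₂ and the integral is an improper Riemann integral. -/

import Mathlib

open Real Filter

/-- The Dirac eigenfunction `ψ^μ_{k,c}(x) = N_{k,c}^{-1/2} e^{i(μx²/2 + kx)} (m, c√(k²+m²) − k)`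
with `N_{k,c} = 2(k²+m² − ck√(k²+m²))`, as a pair of complex components. -/
noncomputable def diracPsi (m μ k c : ℝ) (x : ℝ) : ℂ × ℂ :=
  (((2 * (k ^ 2 + m ^ 2 - c * k * Real.sqrt (k ^ 2 + m ^ 2))) ^ (-(1 / 2 : ℝ)) : ℝ) *
      Complex.exp (Complex.I * (μ * x ^ 2 / 2 + k * x)) * (m : ℝ),
   ((2 * (k ^ 2 + m ^ 2 - c * k * Real.sqrt (k ^ 2 + m ^ 2))) ^ (-(1 / 2 : ℝ)) : ℝ) *
      Complex.exp (Complex.I * (μ * x ^ 2 / 2 + k * x)) *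
      ((c * Real.sqrt (k ^ 2 + m ^ 2) - k : ℝ)))

open MeasureTheory intervalIntegral Complex Set

noncomputable def fker (α β ε : ℝ) (x : ℝ) : ℂ :=
  Complex.exp ((((-ε : ℝ) : ℂ) + (α / 2) * Complex.I) * x ^ 2 + (β : ℂ) * Complex.I * x)

lemma fker_norm_le_one (α β ε : ℝ) (hε : 0 ≤ ε) (x : ℝ) : ‖fker α β ε x‖ ≤ 1 := by
  rw [fker, Complex.norm_exp]
  have h : ((((-ε : ℝ) : ℂ) + (α / 2) * Complex.I) * x ^ 2 + (β : ℂ) * Complex.I * x).re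
      = -ε * x ^ 2 := by simp [← Complex.ofReal_pow]
  rw [h]
  have h2 : -ε * x ^ 2 ≤ 0 := by nlinarith [sq_nonneg x]
  calc Real.exp (-ε * x ^ 2) ≤ Real.exp 0 := Real.exp_le_exp.2 h2
  _ = 1 := Real.exp_zero

lemma tail_bound (α β ε a b : ℝ) (hα : α ≠ 0) (hε0 : 0 ≤ ε) (hε1 : ε ≤ 1)
    (ha0 : 0 < a) (haD : 1 ≤ |α| * a - |β|) (hab : a ≤ b) :
    ‖∫ x in a..b, fker α β ε x‖ ≤ (2 + (2 + |α|) / |α|) / (|α| * a - |β|) := by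
  have hαpos : 0 < |α| := abs_pos.2 hα
  set D := |α| * a - |β| with hD
  have hDpos : 0 < D := lt_of_lt_of_le one_pos haD
  set bc : ℂ := (((-ε : ℝ) : ℂ) + (α / 2) * Complex.I) with hbc
  set c : ℂ := (β : ℂ) * Complex.I with hc
  -- lower bounds for the phase derivative
  have hmono : ∀ x : ℝ, a ≤ x → D ≤ |α| * x - |β| := by
    intro x hx
    have := mul_le_mul_of_nonneg_left hx (le_of_lt hαpos)
    simp only [hD]; linarith
  have hglow : ∀ x : ℝ, a ≤ x → |α| * x - |β| ≤ ‖2 * bc * (x : ℂ) + c‖ := by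
    intro x hx
    have him : (2 * bc * (x : ℂ) + c).im = α * x + β := by
      simp [hbc, hc]; left; ring
    have h1 : |α * x + β| ≤ ‖2 * bc * (x : ℂ) + c‖ := by
      rw [← him]; exact Complex.abs_im_le_norm _
    have h2 : |α| * x - |β| ≤ |α * x + β| := by
      have h3 := abs_add_le (α * x + β) (-β)
      have h4 : |α * x| = |α| * x := by
        rw [abs_mul, abs_of_pos (lt_of_lt_of_le ha0 hx)]
      simp only [add_neg_cancel_right, abs_neg] at h3
      rw [h4] at h3; linarith
    linarith
  have hgD : ∀ x : ℝ, a ≤ x → D ≤ ‖2 * bc * (x : ℂ) + c‖ := fun x hx =>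
    le_trans (hmono x hx) (hglow x hx)
  have hgne : ∀ x : ℝ, a ≤ x → 2 * bc * (x : ℂ) + c ≠ 0 := by
    intro x hx h0
    have := hgD x hx
    rw [h0, norm_zero] at this
    linarith
  -- derivatives
  have hlin : ∀ x : ℝ, HasDerivAt (fun y : ℝ => 2 * bc * (y : ℂ) + c) (2 * bc) x := by
    intro x
    have h1 : HasDerivAt (fun w : ℂ => 2 * bc * w + c) (2 * bc) (x : ℂ) := by
      simpa using ((hasDerivAt_id (x : ℂ)).const_mul (2 * bc)).add_const c
    exact h1.comp_ofReal
  have hvd : ∀ x : ℝ, HasDerivAt (fun y : ℝ => Complex.exp (bc * (y : ℂ) ^ 2 + c * y))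
      ((2 * bc * (x : ℂ) + c) * Complex.exp (bc * (x : ℂ) ^ 2 + c * x)) x := by
    intro x
    have h1 : HasDerivAt (fun w : ℂ => bc * w ^ 2 + c * w) (2 * bc * (x : ℂ) + c) (x : ℂ) := by
      have h2 := ((hasDerivAt_pow 2 (x : ℂ)).const_mul bc).add
        ((hasDerivAt_id (x : ℂ)).const_mul c)
      refine h2.congr_deriv ?_
      push_cast; ring
    simpa [mul_comm] using h1.cexp.comp_ofReal
  have hud : ∀ x : ℝ, a ≤ x → HasDerivAt (fun y : ℝ => (2 * bc * (y : ℂ) + c)⁻¹)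
      (-(2 * bc) / (2 * bc * (x : ℂ) + c) ^ 2) x := by
    intro x hx
    have h1c : HasDerivAt (fun w : ℂ => 2 * bc * w + c) (2 * bc) (x : ℂ) := by
      simpa using ((hasDerivAt_id (x : ℂ)).const_mul (2 * bc)).add_const c
    have h2c := h1c.inv (hgne x hx)
    exact h2c.comp_ofReal
  have hIcc : Set.uIcc a b = Set.Icc a b := Set.uIcc_of_le hab
  have hcontg : Continuous fun y : ℝ => 2 * bc * (y : ℂ) + c :=
    (continuous_const.mul Complex.continuous_ofReal).add continuous_const
  have hcontv : Continuous fun x : ℝ => Complex.exp (bc * (x : ℂ) ^ 2 + c * x) :=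
    Complex.continuous_exp.comp
      ((continuous_const.mul (Complex.continuous_ofReal.pow 2)).add
        (continuous_const.mul Complex.continuous_ofReal))
  have hu'int : IntervalIntegrable (fun x : ℝ => -(2 * bc) / (2 * bc * (x : ℂ) + c) ^ 2)
      volume a b := by
    apply ContinuousOn.intervalIntegrable
    rw [hIcc]
    exact continuousOn_const.div ((hcontg.continuousOn).pow 2)
      (fun x hx => pow_ne_zero 2 (hgne x hx.1))
  have hv'int : IntervalIntegrable
      (fun x : ℝ => (2 * bc * (x : ℂ) + c) * Complex.exp (bc * (x : ℂ) ^ 2 + c * x))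
      volume a b := (hcontg.mul hcontv).intervalIntegrable a b
  have key := intervalIntegral.integral_mul_deriv_eq_deriv_mul
      (u := fun x : ℝ => (2 * bc * (x : ℂ) + c)⁻¹)
      (v := fun x : ℝ => Complex.exp (bc * (x : ℂ) ^ 2 + c * x))
      (u' := fun x : ℝ => -(2 * bc) / (2 * bc * (x : ℂ) + c) ^ 2)
      (v' := fun x : ℝ => (2 * bc * (x : ℂ) + c) * Complex.exp (bc * (x : ℂ) ^ 2 + c * x))
      (fun x hx => hud x (hIcc ▸ hx).1) (fun x _ => hvd x) hu'int hv'int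
  have heq : ∫ x in a..b, fker α β ε x
      = ∫ x in a..b, (2 * bc * (x : ℂ) + c)⁻¹ *
          ((2 * bc * (x : ℂ) + c) * Complex.exp (bc * (x : ℂ) ^ 2 + c * x)) := by
    apply intervalIntegral.integral_congr
    intro x hx
    rw [hIcc] at hx
    show fker α β ε x = (2 * bc * (x : ℂ) + c)⁻¹ *
        ((2 * bc * (x : ℂ) + c) * Complex.exp (bc * (x : ℂ) ^ 2 + c * x))
    rw [inv_mul_cancel_left₀ (hgne x hx.1), fker, hbc, hc]
  rw [heq, key]
  -- bounds
  have hvle : ∀ x : ℝ, ‖Complex.exp (bc * (x : ℂ) ^ 2 + c * x)‖ ≤ 1 := by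
    intro x
    have := fker_norm_le_one α β ε hε0 x
    rw [fker] at this
    simpa [hbc, hc] using this
  have hule : ∀ x : ℝ, a ≤ x → ‖(2 * bc * (x : ℂ) + c)⁻¹‖ ≤ D⁻¹ := by
    intro x hx
    rw [norm_inv]
    exact inv_anti₀ hDpos (hgD x hx)
  have huvle : ∀ x : ℝ, a ≤ x →
      ‖(2 * bc * (x : ℂ) + c)⁻¹ * Complex.exp (bc * (x : ℂ) ^ 2 + c * x)‖ ≤ D⁻¹ := by
    intro x hx
    rw [norm_mul]
    calc ‖(2 * bc * (x : ℂ) + c)⁻¹‖ * ‖Complex.exp (bc * (x : ℂ) ^ 2 + c * x)‖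
        ≤ D⁻¹ * 1 := mul_le_mul (hule x hx) (hvle x) (norm_nonneg _) (by positivity)
      _ = D⁻¹ := mul_one _
  have hbcnorm : ‖(2 : ℂ) * bc‖ ≤ 2 + |α| := by
    have h1 : ‖bc‖ ≤ ε + |α| / 2 := by
      have e1 : ‖((-ε : ℝ) : ℂ)‖ = ε := by
        rw [Complex.norm_real, Real.norm_eq_abs, abs_neg, _root_.abs_of_nonneg hε0]
      have e2 : ‖((α : ℂ) / 2) * Complex.I‖ = |α| / 2 := by
        rw [norm_mul, Complex.norm_I, mul_one, norm_div]
        simp [Complex.norm_real]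
      calc ‖bc‖ ≤ ‖((-ε : ℝ) : ℂ)‖ + ‖((α : ℂ) / 2) * Complex.I‖ := norm_add_le _ _
        _ = ε + |α| / 2 := by rw [e1, e2]
    calc ‖(2 : ℂ) * bc‖ = 2 * ‖bc‖ := by rw [norm_mul]; norm_num
      _ ≤ 2 * (ε + |α| / 2) := by linarith
      _ ≤ 2 + |α| := by linarith
  -- FTC for the comparison integral
  have hHder : ∀ x : ℝ, a ≤ x →
      HasDerivAt (fun y : ℝ => -(|α| * y - |β|)⁻¹ / |α|) ((|α| * x - |β|) ^ 2)⁻¹ x := by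
    intro x hx
    have hne : |α| * x - |β| ≠ 0 := by
      have := hmono x hx; intro h; rw [h] at this; linarith
    have h1 : HasDerivAt (fun y : ℝ => |α| * y - |β|) |α| x := by
      simpa using ((hasDerivAt_id x).const_mul |α|).sub_const |β|
    have h2 := (h1.inv hne).neg.div_const |α|
    refine h2.congr_deriv ?_
    field_simp
  have hφint : IntervalIntegrable (fun x : ℝ => ((|α| * x - |β|) ^ 2)⁻¹) volume a b := by
    apply ContinuousOn.intervalIntegrable
    rw [hIcc]
    apply ContinuousOn.inv₀ (by fun_prop)
    intro x hx
    exact pow_ne_zero 2 (ne_of_gt (lt_of_lt_of_le hDpos (hmono x hx.1)))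
  have hint : ∫ x in a..b, ((|α| * x - |β|) ^ 2)⁻¹
      = -(|α| * b - |β|)⁻¹ / |α| - -(|α| * a - |β|)⁻¹ / |α| :=
    intervalIntegral.integral_eq_sub_of_hasDerivAt
      (fun x hx => hHder x (hIcc ▸ hx).1) hφint
  have hintle : ∫ x in a..b, ((|α| * x - |β|) ^ 2)⁻¹ ≤ D⁻¹ / |α| := by
    rw [hint]
    have h1 : 0 < |α| * b - |β| := lt_of_lt_of_le hDpos (hmono b hab)
    have h2 : 0 ≤ (|α| * b - |β|)⁻¹ / |α| := by positivity
    have h3 : -(|α| * a - |β|)⁻¹ / |α| = -(D⁻¹ / |α|) := by rw [hD]; ring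
    rw [h3]
    have h4 : -(|α| * b - |β|)⁻¹ / |α| ≤ 0 := by
      rw [neg_div]; exact neg_nonpos_of_nonneg h2
    linarith
  have hnormint : ‖∫ x in a..b, -(2 * bc) / (2 * bc * (x : ℂ) + c) ^ 2 *
      Complex.exp (bc * (x : ℂ) ^ 2 + c * x)‖ ≤ (2 + |α|) * (D⁻¹ / |α|) := by
    have hb1 : ∀ᵐ t : ℝ ∂(volume.restrict (Set.uIoc a b)), ‖-(2 * bc) / (2 * bc * (t : ℂ) + c) ^ 2 *
        Complex.exp (bc * (t : ℂ) ^ 2 + c * t)‖ ≤ (2 + |α|) * ((|α| * t - |β|) ^ 2)⁻¹ := by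
      apply ae_restrict_of_forall_mem measurableSet_uIoc
      intro t ht
      have ht' : a ≤ t := by
        rw [Set.uIoc_of_le hab] at ht; exact le_of_lt ht.1
      have hgt := hglow t ht'
      have hpos : 0 < |α| * t - |β| := lt_of_lt_of_le hDpos (hmono t ht')
      rw [norm_mul, norm_div, norm_neg, norm_pow]
      calc ‖2 * bc‖ / ‖2 * bc * (t : ℂ) + c‖ ^ 2 * ‖Complex.exp (bc * (t : ℂ) ^ 2 + c * t)‖
          ≤ ‖2 * bc‖ / ‖2 * bc * (t : ℂ) + c‖ ^ 2 * 1 :=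
            mul_le_mul_of_nonneg_left (hvle t) (by positivity)
        _ = ‖2 * bc‖ / ‖2 * bc * (t : ℂ) + c‖ ^ 2 := mul_one _
        _ ≤ (2 + |α|) / (|α| * t - |β|) ^ 2 :=
            div_le_div₀ (by positivity) hbcnorm (by positivity)
              (pow_le_pow_left₀ (le_of_lt hpos) hgt 2)
        _ = (2 + |α|) * ((|α| * t - |β|) ^ 2)⁻¹ := by rw [div_eq_mul_inv]
    have h5 := intervalIntegral.norm_integral_le_abs_of_norm_le hb1 (hφint.const_mul (2 + |α|))
    calc ‖∫ x in a..b, -(2 * bc) / (2 * bc * (x : ℂ) + c) ^ 2 *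
        Complex.exp (bc * (x : ℂ) ^ 2 + c * x)‖
        ≤ |∫ t in a..b, (2 + |α|) * ((|α| * t - |β|) ^ 2)⁻¹| := h5
      _ = ∫ t in a..b, (2 + |α|) * ((|α| * t - |β|) ^ 2)⁻¹ :=
          _root_.abs_of_nonneg (intervalIntegral.integral_nonneg hab
            (fun u _ => by positivity))
      _ = (2 + |α|) * ∫ t in a..b, ((|α| * t - |β|) ^ 2)⁻¹ :=
          intervalIntegral.integral_const_mul _ _
      _ ≤ (2 + |α|) * (D⁻¹ / |α|) := by
          apply mul_le_mul_of_nonneg_left hintle (by positivity)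
  -- combine
  have hfinal : (D⁻¹ + D⁻¹) + (2 + |α|) * (D⁻¹ / |α|) = (2 + (2 + |α|) / |α|) / D := by
    field_simp
    ring
  calc ‖(2 * bc * (b : ℂ) + c)⁻¹ * Complex.exp (bc * (b : ℂ) ^ 2 + c * b) -
        (2 * bc * (a : ℂ) + c)⁻¹ * Complex.exp (bc * (a : ℂ) ^ 2 + c * a) -
        ∫ x in a..b, -(2 * bc) / (2 * bc * (x : ℂ) + c) ^ 2 *
          Complex.exp (bc * (x : ℂ) ^ 2 + c * x)‖
      ≤ ‖(2 * bc * (b : ℂ) + c)⁻¹ * Complex.exp (bc * (b : ℂ) ^ 2 + c * b) -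
        (2 * bc * (a : ℂ) + c)⁻¹ * Complex.exp (bc * (a : ℂ) ^ 2 + c * a)‖ +
        ‖∫ x in a..b, -(2 * bc) / (2 * bc * (x : ℂ) + c) ^ 2 *
          Complex.exp (bc * (x : ℂ) ^ 2 + c * x)‖ := norm_sub_le _ _
    _ ≤ (D⁻¹ + D⁻¹) + (2 + |α|) * (D⁻¹ / |α|) := by
        apply add_le_add _ hnormint
        calc ‖_ - _‖ ≤ _ + _ := norm_sub_le _ _
          _ ≤ D⁻¹ + D⁻¹ := add_le_add (huvle b hab) (huvle a le_rfl)
    _ = (2 + (2 + |α|) / |α|) / D := hfinal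

noncomputable def fcoef (α ε : ℝ) : ℂ := ((-ε : ℝ) : ℂ) + ((α : ℂ) / 2) * Complex.I

noncomputable def fval (α β ε : ℝ) : ℂ :=
  (↑π / -(fcoef α ε)) ^ ((1 : ℂ) / 2) *
    Complex.exp (0 - ((β : ℂ) * Complex.I) ^ 2 / (4 * fcoef α ε))

lemma fker_continuous (α β ε : ℝ) : Continuous (fker α β ε) :=
  Complex.continuous_exp.comp
    ((continuous_const.mul (Complex.continuous_ofReal.pow 2)).add
      (continuous_const.mul Complex.continuous_ofReal))

lemma fker_intervalIntegrable (α β ε a b : ℝ) : IntervalIntegrable (fker α β ε) volume a b :=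
  (fker_continuous α β ε).intervalIntegrable a b

lemma fcoef_re (α ε : ℝ) : (fcoef α ε).re = -ε := by simp [fcoef]

lemma fval_eq_integral (α β ε : ℝ) (hε : 0 < ε) :
    ∫ x : ℝ, fker α β ε x = fval α β ε := by
  have hbre : (fcoef α ε).re < 0 := by rw [fcoef_re]; linarith
  have h0 := integral_cexp_quadratic hbre ((β : ℂ) * Complex.I) 0
  simp only [add_zero] at h0
  rw [fval, ← h0]
  rfl

lemma fval_rep (α : ℝ) (hα : α ≠ 0) :
    ↑π / -(fcoef α 0) = ((2 * π / α : ℝ) : ℂ) * Complex.I := by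
  have h1 : -(fcoef α 0) = ((-α / 2 : ℝ) : ℂ) * Complex.I := by
    rw [fcoef]; push_cast; ring
  rw [div_eq_mul_inv, h1, mul_inv, Complex.inv_I]
  rw [← Complex.ofReal_inv]
  have hα2 : (-α / 2 : ℝ) ≠ 0 := by simp [hα]
  push_cast
  field_simp

lemma fval_exp_rep (α β : ℝ) (hα : α ≠ 0) :
    (0 : ℂ) - ((β : ℂ) * Complex.I) ^ 2 / (4 * fcoef α 0)
      = ((-(β ^ 2 / (2 * α)) : ℝ) : ℂ) * Complex.I := by
  have h1 : (4 : ℂ) * fcoef α 0 = ((2 * α : ℝ) : ℂ) * Complex.I := by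
    rw [fcoef]; push_cast; ring
  rw [h1]
  have h2 : ((2 * α : ℝ) : ℂ) * Complex.I ≠ 0 := by
    simp [Complex.ext_iff, hα]
  have hα' : (α : ℂ) ≠ 0 := Complex.ofReal_ne_zero.2 hα
  push_cast
  field_simp
  ring_nf

lemma abs_fval_zero (α β : ℝ) (hα : α ≠ 0) :
    ‖fval α β 0‖ = Real.sqrt (2 * π / |α|) := by
  rw [fval, norm_mul, fval_rep α hα, fval_exp_rep α β hα]
  have h2 : ‖Complex.exp (((-(β ^ 2 / (2 * α)) : ℝ) : ℂ) * Complex.I)‖ = 1 := by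
    rw [Complex.norm_exp]
    have : ((((-(β ^ 2 / (2 * α)) : ℝ) : ℂ)) * Complex.I).re = 0 := by
      rw [Complex.mul_re, Complex.I_re, Complex.I_im, Complex.ofReal_re, Complex.ofReal_im]
      ring
    rw [this, Real.exp_zero]
  rw [h2, mul_one]
  have hbase : (((2 * π / α : ℝ) : ℂ) * Complex.I) ≠ 0 := by
    simp [Complex.ext_iff, hα, Real.pi_ne_zero]
  rw [Complex.norm_cpow_of_ne_zero hbase]
  have habs : ‖((2 * π / α : ℝ) : ℂ) * Complex.I‖ = 2 * π / |α| := by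
    rw [norm_mul, Complex.norm_I, mul_one, Complex.norm_real, Real.norm_eq_abs, abs_div, abs_of_pos (by positivity : (0:ℝ) < 2 * π)]
  rw [habs]
  have hre : ((1 : ℂ) / 2).re = (1 / 2 : ℝ) := by simp
  have him : ((1 : ℂ) / 2).im = 0 := by simp
  rw [hre, him, mul_zero, Real.exp_zero, div_one, Real.sqrt_eq_rpow]

lemma fcoef_continuous (α : ℝ) : Continuous fun ε : ℝ => fcoef α ε := by
  unfold fcoef
  exact (Complex.continuous_ofReal.comp continuous_neg).add continuous_const

lemma fcoef_zero_ne (α : ℝ) (hα : α ≠ 0) : fcoef α 0 ≠ 0 := by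
  simp [fcoef, Complex.ext_iff, hα]

lemma fval_tendsto (α β : ℝ) (hα : α ≠ 0) :
    Tendsto (fun ε : ℝ => fval α β ε) (nhdsWithin 0 (Set.Ioi 0)) (nhds (fval α β 0)) := by
  have h1 : ContinuousAt (fun ε : ℝ => (π : ℂ) / -(fcoef α ε)) 0 :=
    ContinuousAt.div continuousAt_const ((fcoef_continuous α).neg.continuousAt)
      (by simpa using fcoef_zero_ne α hα)
  have hslit : (π : ℂ) / -(fcoef α 0) ∈ Complex.slitPlane := by
    rw [Complex.mem_slitPlane_iff, fval_rep α hα]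
    apply Or.inr
    have him : (((2 * π / α : ℝ) : ℂ) * Complex.I).im = 2 * π / α := by
      rw [Complex.mul_im, Complex.I_re, Complex.I_im, Complex.ofReal_re, Complex.ofReal_im]
      ring
    rw [him]
    exact div_ne_zero (by positivity) hα
  have h3 : ContinuousAt (fun ε : ℝ => ((π : ℂ) / -(fcoef α ε)) ^ ((1 : ℂ) / 2)) 0 :=
    h1.cpow continuousAt_const hslit
  have h4 : ContinuousAt (fun ε : ℝ => (0 : ℂ) - ((β : ℂ) * Complex.I) ^ 2 / (4 * fcoef α ε)) 0 :=
    ContinuousAt.sub continuousAt_const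
      (ContinuousAt.div continuousAt_const
        ((continuous_const.mul (fcoef_continuous α)).continuousAt)
        (mul_ne_zero (by norm_num : (4 : ℂ) ≠ 0) (fcoef_zero_ne α hα)))
  have h5 : ContinuousAt
      (fun ε : ℝ => Complex.exp ((0 : ℂ) - ((β : ℂ) * Complex.I) ^ 2 / (4 * fcoef α ε))) 0 :=
    Complex.continuous_exp.continuousAt.comp h4
  have hc : ContinuousAt (fun ε : ℝ => fval α β ε) 0 := h3.mul h5
  exact hc.continuousWithinAt

lemma tail_bound_neg (α β ε a b : ℝ) (hα : α ≠ 0) (hε0 : 0 ≤ ε) (hε1 : ε ≤ 1)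
    (ha0 : 0 < a) (haD : 1 ≤ |α| * a - |β|) (hab : a ≤ b) :
    ‖∫ x in (-b)..(-a), fker α β ε x‖ ≤ (2 + (2 + |α|) / |α|) / (|α| * a - |β|) := by
  have h := tail_bound α (-β) ε a b hα hε0 hε1 ha0 (by rwa [abs_neg]) hab
  rw [abs_neg] at h
  have heq : ∫ x in (-b)..(-a), fker α β ε x = ∫ x in a..b, fker α (-β) ε x := by
    rw [← intervalIntegral.integral_comp_neg (fun x => fker α β ε x)]
    apply intervalIntegral.integral_congr
    intro x _
    show fker α β ε (-x) = fker α (-β) ε x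
    unfold fker
    congr 1
    push_cast
    ring
  rw [heq]
  exact h

lemma fresnel_conv (α β : ℝ) (hα : α ≠ 0) :
    ∃ L : ℂ, Tendsto (fun p : ℝ × ℝ => ∫ x in p.1..p.2, fker α β 0 x)
        (atBot ×ˢ atTop) (nhds L) ∧
      ‖L‖ = Real.sqrt (2 * π / |α|) := by
  have hαpos : 0 < |α| := abs_pos.2 hα
  refine ⟨fval α β 0, ?_, abs_fval_zero α β hα⟩
  rw [Metric.tendsto_nhds]
  intro δ hδ
  set K := 2 + (2 + |α|) / |α| with hK
  have hKpos : 0 < K := by positivity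
  set M := max 1 (8 * K / δ) with hM
  have hM1 : (1 : ℝ) ≤ M := le_max_left _ _
  have hMpos : (0 : ℝ) < M := lt_of_lt_of_le one_pos hM1
  set R := max 1 ((|β| + M) / |α|) with hR
  have hR1 : (1 : ℝ) ≤ R := le_max_left _ _
  have hR0 : 0 < R := lt_of_lt_of_le one_pos hR1
  have hRD : M ≤ |α| * R - |β| := by
    have h1 : (|β| + M) / |α| ≤ R := le_max_right _ _
    rw [div_le_iff₀ hαpos] at h1
    nlinarith
  have hRD1 : 1 ≤ |α| * R - |β| := le_trans hM1 hRD
  have hKM : K / M ≤ δ / 8 := by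
    have h8 : 8 * K / δ ≤ M := le_max_right _ _
    rw [div_le_iff₀ hδ] at h8
    rw [div_le_div_iff₀ hMpos (by norm_num : (0:ℝ) < 8)]
    nlinarith
  have htail : ∀ ε : ℝ, 0 ≤ ε → ε ≤ 1 → ∀ w, R ≤ w →
      ‖∫ x in R..w, fker α β ε x‖ ≤ δ / 8 := by
    intro ε h0 h1 w hw
    calc ‖∫ x in R..w, fker α β ε x‖ ≤ K / (|α| * R - |β|) :=
        tail_bound α β ε R w hα h0 h1 hR0 hRD1 hw
      _ ≤ K / M := div_le_div_of_nonneg_left hKpos.le hMpos hRD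
      _ ≤ δ / 8 := hKM
  have htailneg : ∀ ε : ℝ, 0 ≤ ε → ε ≤ 1 → ∀ u, u ≤ -R →
      ‖∫ x in u..(-R), fker α β ε x‖ ≤ δ / 8 := by
    intro ε h0 h1 u hu
    have hRu : R ≤ -u := by linarith
    have := tail_bound_neg α β ε R (-u) hα h0 h1 hR0 hRD1 hRu
    rw [neg_neg] at this
    calc ‖∫ x in u..(-R), fker α β ε x‖ ≤ K / (|α| * R - |β|) := this
      _ ≤ K / M := div_le_div_of_nonneg_left hKpos.le hMpos hRD
      _ ≤ δ / 8 := hKM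
  -- dominated convergence on [-R, R]
  have hdc : Tendsto (fun ε : ℝ => ∫ x in (-R)..R, fker α β ε x) (nhdsWithin 0 (Set.Ioi 0))
      (nhds (∫ x in (-R)..R, fker α β 0 x)) := by
    apply intervalIntegral.tendsto_integral_filter_of_dominated_convergence (bound := fun _ => 1)
    · exact Eventually.of_forall fun ε => ((fker_continuous α β ε).aestronglyMeasurable).restrict
    · filter_upwards [eventually_mem_nhdsWithin] with ε hε
      exact Eventually.of_forall fun x => fun _ => fker_norm_le_one α β ε (le_of_lt hε) x
    · exact intervalIntegrable_const
    · refine Eventually.of_forall fun x => fun _ => ?_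
      have hbig : Continuous fun ε : ℝ =>
          (((-ε : ℝ) : ℂ) + ((α : ℂ) / 2) * Complex.I) * (x : ℂ) ^ 2 +
            (β : ℂ) * Complex.I * (x : ℂ) :=
        ((((Complex.continuous_ofReal.comp continuous_neg).add continuous_const).mul
          continuous_const).add continuous_const)
      have hcont : Continuous fun ε : ℝ => fker α β ε x := Complex.continuous_exp.comp hbig
      exact hcont.continuousAt.continuousWithinAt
  have hev1 := Metric.tendsto_nhds.1 hdc (δ / 8) (by linarith)
  have hev2 := Metric.tendsto_nhds.1 (fval_tendsto α β hα) (δ / 8) (by linarith)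
  have hev3 : ∀ᶠ ε : ℝ in nhdsWithin 0 (Set.Ioi 0), ε < 1 :=
    Filter.Eventually.filter_mono nhdsWithin_le_nhds
      (eventually_lt_nhds (by norm_num : (0:ℝ) < 1))
  have hev4 : ∀ᶠ ε : ℝ in nhdsWithin 0 (Set.Ioi 0), ε ∈ Set.Ioi 0 := eventually_mem_nhdsWithin
  obtain ⟨ε, hd1, hd2, hε1, hε0⟩ := (hev1.and (hev2.and (hev3.and hev4))).exists
  replace hε0 : 0 < ε := hε0
  have hε1' : ε ≤ 1 := le_of_lt hε1
  -- the Lebesgue integral of fker ε and its tail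
  have hInt : Integrable (fker α β ε) volume := by
    have hre : (fcoef α ε).re < 0 := by rw [fcoef_re]; linarith
    have h := integrable_cexp_quadratic' hre ((β : ℂ) * Complex.I) 0
    refine h.congr (Eventually.of_forall fun x => ?_)
    simp [fker, fcoef]
  have hiv : ‖(∫ x : ℝ, fker α β ε x) - ∫ x in (-R)..R, fker α β ε x‖ ≤ δ / 4 := by
    have hlim : Tendsto (fun t : ℝ => ∫ x in (-t)..t, fker α β ε x) atTop
        (nhds (∫ x : ℝ, fker α β ε x)) :=
      intervalIntegral_tendsto_integral hInt tendsto_neg_atTop_atBot tendsto_id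
    have hlim2 := (hlim.sub (tendsto_const_nhds
      (x := ∫ x in (-R)..R, fker α β ε x))).norm
    apply le_of_tendsto hlim2
    filter_upwards [eventually_ge_atTop R] with t ht
    have h1 := fker_intervalIntegrable α β ε (-t) (-R)
    have h2 := fker_intervalIntegrable α β ε (-R) R
    have h3 := fker_intervalIntegrable α β ε (-t) R
    have h4 := fker_intervalIntegrable α β ε R t
    have hsplit : ∫ x in (-t)..t, fker α β ε x =
        ((∫ x in (-t)..(-R), fker α β ε x) + ∫ x in (-R)..R, fker α β ε x) +
          ∫ x in R..t, fker α β ε x := by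
      rw [intervalIntegral.integral_add_adjacent_intervals h1 h2,
        intervalIntegral.integral_add_adjacent_intervals h3 h4]
    rw [hsplit]
    have hre : ((∫ x in (-t)..(-R), fker α β ε x) + ∫ x in (-R)..R, fker α β ε x) +
          (∫ x in R..t, fker α β ε x) - ∫ x in (-R)..R, fker α β ε x
        = (∫ x in (-t)..(-R), fker α β ε x) + ∫ x in R..t, fker α β ε x := by ring
    rw [hre]
    calc ‖(∫ x in (-t)..(-R), fker α β ε x) + ∫ x in R..t, fker α β ε x‖
        ≤ ‖∫ x in (-t)..(-R), fker α β ε x‖ + ‖∫ x in R..t, fker α β ε x‖ := norm_add_le _ _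
      _ ≤ δ / 8 + δ / 8 := add_le_add
          (htailneg ε hε0.le hε1' (-t) (by linarith)) (htail ε hε0.le hε1' t ht)
      _ = δ / 4 := by ring
  have hmid : ‖(∫ x in (-R)..R, fker α β 0 x) - fval α β 0‖ ≤ δ / 2 := by
    have e1 : ‖(∫ x in (-R)..R, fker α β 0 x) - ∫ x in (-R)..R, fker α β ε x‖ ≤ δ / 8 := by
      rw [← dist_eq_norm, dist_comm]
      exact le_of_lt hd1
    have e2 : ‖(∫ x in (-R)..R, fker α β ε x) - fval α β ε‖ ≤ δ / 4 := by
      rw [← fval_eq_integral α β ε hε0, ← norm_neg]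
      simpa using hiv
    have e3 : ‖fval α β ε - fval α β 0‖ ≤ δ / 8 := by
      rw [← dist_eq_norm]
      exact le_of_lt hd2
    calc ‖(∫ x in (-R)..R, fker α β 0 x) - fval α β 0‖
        = ‖((∫ x in (-R)..R, fker α β 0 x) - ∫ x in (-R)..R, fker α β ε x) +
            ((∫ x in (-R)..R, fker α β ε x) - fval α β ε) + (fval α β ε - fval α β 0)‖ := by
          congr 1; ring
      _ ≤ ‖((∫ x in (-R)..R, fker α β 0 x) - ∫ x in (-R)..R, fker α β ε x) +
            ((∫ x in (-R)..R, fker α β ε x) - fval α β ε)‖ + ‖fval α β ε - fval α β 0‖ :=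
          norm_add_le _ _
      _ ≤ ‖(∫ x in (-R)..R, fker α β 0 x) - ∫ x in (-R)..R, fker α β ε x‖ +
            ‖(∫ x in (-R)..R, fker α β ε x) - fval α β ε‖ + ‖fval α β ε - fval α β 0‖ :=
          add_le_add_left (norm_add_le _ _) _
      _ ≤ δ / 8 + δ / 4 + δ / 8 := add_le_add (add_le_add e1 e2) e3
      _ = δ / 2 := by ring
  filter_upwards [(eventually_le_atBot (-R)).prod_inl atTop,
    (eventually_ge_atTop R).prod_inr atBot] with p hp1 hp2
  have h1 := fker_intervalIntegrable α β 0 p.1 (-R)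
  have h2 := fker_intervalIntegrable α β 0 (-R) R
  have h3 := fker_intervalIntegrable α β 0 p.1 R
  have h4 := fker_intervalIntegrable α β 0 R p.2
  have hsplit : ∫ x in p.1..p.2, fker α β 0 x =
      ((∫ x in p.1..(-R), fker α β 0 x) + ∫ x in (-R)..R, fker α β 0 x) +
        ∫ x in R..p.2, fker α β 0 x := by
    rw [intervalIntegral.integral_add_adjacent_intervals h1 h2,
      intervalIntegral.integral_add_adjacent_intervals h3 h4]
  rw [dist_eq_norm, hsplit]
  have hre : ((∫ x in p.1..(-R), fker α β 0 x) + ∫ x in (-R)..R, fker α β 0 x) +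
        (∫ x in R..p.2, fker α β 0 x) - fval α β 0
      = ((∫ x in p.1..(-R), fker α β 0 x) + ∫ x in R..p.2, fker α β 0 x) +
        ((∫ x in (-R)..R, fker α β 0 x) - fval α β 0) := by ring
  rw [hre]
  calc ‖((∫ x in p.1..(-R), fker α β 0 x) + ∫ x in R..p.2, fker α β 0 x) +
        ((∫ x in (-R)..R, fker α β 0 x) - fval α β 0)‖
      ≤ ‖(∫ x in p.1..(-R), fker α β 0 x) + ∫ x in R..p.2, fker α β 0 x‖ +
        ‖(∫ x in (-R)..R, fker α β 0 x) - fval α β 0‖ := norm_add_le _ _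
    _ ≤ (‖∫ x in p.1..(-R), fker α β 0 x‖ + ‖∫ x in R..p.2, fker α β 0 x‖) + δ / 2 :=
        add_le_add (norm_add_le _ _) hmid
    _ ≤ (δ / 8 + δ / 8) + δ / 2 := add_le_add_left
        (add_le_add (htailneg 0 le_rfl (by norm_num) p.1 hp1) (htail 0 le_rfl (by norm_num) p.2 hp2)) _
    _ < δ := by linarith

lemma normsq_eq (m k cc : ℝ) (hcc : cc = 1 ∨ cc = -1) :
    2 * (k ^ 2 + m ^ 2 - cc * k * Real.sqrt (k ^ 2 + m ^ 2))
      = m ^ 2 + (cc * Real.sqrt (k ^ 2 + m ^ 2) - k) ^ 2 := by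
  have hs : Real.sqrt (k ^ 2 + m ^ 2) ^ 2 = k ^ 2 + m ^ 2 :=
    Real.sq_sqrt (by positivity)
  rcases hcc with rfl | rfl <;> linear_combination -hs

theorem dirac_overlap_bound (m : ℝ) (hm : 0 < m) (μ μ' : ℝ) (hμ : μ ≠ μ')
    (k k' : ℝ) (c c' : ℝ) (hc : c = 1 ∨ c = -1) (hc' : c' = 1 ∨ c' = -1) :
    ∃ L : ℂ,
      Tendsto (fun p : ℝ × ℝ =>
          ∫ x in p.1..p.2,
            (starRingEnd ℂ) (diracPsi m μ' k' c' x).1 * (diracPsi m μ k c x).1 +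
            (starRingEnd ℂ) (diracPsi m μ' k' c' x).2 * (diracPsi m μ k c x).2)
        (Filter.atBot ×ˢ Filter.atTop) (nhds L) ∧
      ‖L‖ ≤ Real.sqrt (2 * Real.pi / |μ - μ'|) := by
  have hαne : μ - μ' ≠ 0 := sub_ne_zero.2 hμ
  set s : ℝ := Real.sqrt (k ^ 2 + m ^ 2) with hsdef
  set s' : ℝ := Real.sqrt (k' ^ 2 + m ^ 2) with hs'def
  set A : ℝ := c * s - k with hA
  set A' : ℝ := c' * s' - k' with hA'
  set N : ℝ := 2 * (k ^ 2 + m ^ 2 - c * k * s) with hN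
  set N' : ℝ := 2 * (k' ^ 2 + m ^ 2 - c' * k' * s') with hN'
  have hNa : N = m ^ 2 + A ^ 2 := normsq_eq m k c hc
  have hNa' : N' = m ^ 2 + A' ^ 2 := normsq_eq m k' c' hc'
  have hNpos : 0 < N := by rw [hNa]; nlinarith [sq_nonneg A, pow_pos hm 2]
  have hNpos' : 0 < N' := by rw [hNa']; nlinarith [sq_nonneg A', pow_pos hm 2]
  set n : ℝ := N ^ (-(1 / 2 : ℝ)) with hn
  set n' : ℝ := N' ^ (-(1 / 2 : ℝ)) with hn'
  have hnpos : 0 < n := Real.rpow_pos_of_pos hNpos _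
  have hnpos' : 0 < n' := Real.rpow_pos_of_pos hNpos' _
  have hn2 : n ^ 2 = N⁻¹ := by
    rw [hn, ← Real.rpow_natCast (N ^ (-(1 / 2 : ℝ))) 2, ← Real.rpow_mul hNpos.le]
    norm_num
    exact Real.rpow_neg_one N
  have hn'2 : n' ^ 2 = N'⁻¹ := by
    rw [hn', ← Real.rpow_natCast (N' ^ (-(1 / 2 : ℝ))) 2, ← Real.rpow_mul hNpos'.le]
    norm_num
    exact Real.rpow_neg_one N'
  set C : ℝ := n' * n * (m * m + A' * A) with hC
  have hCS : (m * m + A' * A) ^ 2 ≤ N * N' := by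
    rw [hNa, hNa']
    nlinarith [sq_nonneg (m * (A - A')), sq_nonneg (A * A' - m * m)]
  have hC2 : C ^ 2 ≤ 1 := by
    have h1 : C ^ 2 = (m * m + A' * A) ^ 2 * (N⁻¹ * N'⁻¹) := by
      rw [hC, ← hn2, ← hn'2]; ring
    rw [h1]
    calc (m * m + A' * A) ^ 2 * (N⁻¹ * N'⁻¹) ≤ N * N' * (N⁻¹ * N'⁻¹) :=
        mul_le_mul_of_nonneg_right hCS (by positivity)
      _ = 1 := by field_simp
  have hCle : |C| ≤ 1 := by nlinarith [_root_.sq_abs C, abs_nonneg C]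
  -- pointwise reduction of the integrand
  have hpt : ∀ x : ℝ,
      (starRingEnd ℂ) (diracPsi m μ' k' c' x).1 * (diracPsi m μ k c x).1 +
        (starRingEnd ℂ) (diracPsi m μ' k' c' x).2 * (diracPsi m μ k c x).2
      = ((C : ℝ) : ℂ) * fker (μ - μ') (k - k') 0 x := by
    intro x
    unfold diracPsi
    simp only [map_mul, Complex.conj_ofReal, ← Complex.exp_conj]
    have hconj : (starRingEnd ℂ) Complex.I * (starRingEnd ℂ) ((μ' : ℂ) * ↑x ^ 2 / 2 + ↑k' * ↑x)
        = -(Complex.I * (↑μ' * ↑x ^ 2 / 2 + ↑k' * ↑x)) := by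
      rw [Complex.conj_I]
      rw [show ((μ' : ℂ) * ↑x ^ 2 / 2 + ↑k' * ↑x) = (((μ' * x ^ 2 / 2 + k' * x : ℝ)) : ℂ) by
        push_cast; ring]
      rw [Complex.conj_ofReal]
      push_cast
      ring
    rw [hconj]
    have hmerge : Complex.exp (-(Complex.I * (↑μ' * ↑x ^ 2 / 2 + ↑k' * ↑x))) *
        Complex.exp (Complex.I * (↑μ * ↑x ^ 2 / 2 + ↑k * ↑x))
        = fker (μ - μ') (k - k') 0 x := by
      rw [← Complex.exp_add]
      unfold fker
      congr 1
      push_cast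
      ring
    calc ((n' : ℝ) : ℂ) * Complex.exp (-(Complex.I * (↑μ' * ↑x ^ 2 / 2 + ↑k' * ↑x))) * ↑m *
          (((n : ℝ) : ℂ) * Complex.exp (Complex.I * (↑μ * ↑x ^ 2 / 2 + ↑k * ↑x)) * ↑m) +
        ((n' : ℝ) : ℂ) * Complex.exp (-(Complex.I * (↑μ' * ↑x ^ 2 / 2 + ↑k' * ↑x))) * ↑A' *
          (((n : ℝ) : ℂ) * Complex.exp (Complex.I * (↑μ * ↑x ^ 2 / 2 + ↑k * ↑x)) * ↑A)
        = (↑n' * ↑n * (↑m * ↑m + ↑A' * ↑A)) *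
            (Complex.exp (-(Complex.I * (↑μ' * ↑x ^ 2 / 2 + ↑k' * ↑x))) *
              Complex.exp (Complex.I * (↑μ * ↑x ^ 2 / 2 + ↑k * ↑x))) := by ring
      _ = ((C : ℝ) : ℂ) * fker (μ - μ') (k - k') 0 x := by
          rw [hmerge, hC]; push_cast; ring
  obtain ⟨L0, hT, habs⟩ := fresnel_conv (μ - μ') (k - k') hαne
  refine ⟨((C : ℝ) : ℂ) * L0, ?_, ?_⟩
  · have hfun : (fun p : ℝ × ℝ =>
        ∫ x in p.1..p.2,
          (starRingEnd ℂ) (diracPsi m μ' k' c' x).1 * (diracPsi m μ k c x).1 +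
          (starRingEnd ℂ) (diracPsi m μ' k' c' x).2 * (diracPsi m μ k c x).2)
        = fun p : ℝ × ℝ => ((C : ℝ) : ℂ) * ∫ x in p.1..p.2, fker (μ - μ') (k - k') 0 x := by
      funext p
      rw [← intervalIntegral.integral_const_mul]
      exact intervalIntegral.integral_congr fun x _ => hpt x
    rw [hfun]
    exact hT.const_mul _
  · rw [norm_mul, Complex.norm_real, Real.norm_eq_abs, habs]
    calc |C| * Real.sqrt (2 * π / |μ - μ'|) ≤ 1 * Real.sqrt (2 * π / |μ - μ'|) :=
        mul_le_mul_of_nonneg_right hCle (Real.sqrt_nonneg _)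
      _ = Real.sqrt (2 * Real.pi / |μ - μ'|) := one_mul _
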